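/- (Barbalat's lemma) If f : [0,+∞) → ℝ is uniformly continuous and the limit lim_{t→+∞} ∫₀ᵗ f(τ) dτ exists and is finite, then lim_{t→+∞} f(t) = 0. -/

import Mathlib

open Filter Topology Set

/-- **Barbalat's lemma.** If `f : [0,∞) → ℝ` is uniformly continuous and
`∫₀ᵗ f(τ) dτ` has a finite limit as `t → +∞`, then `f(t) → 0` as `t → +∞`. -/
theorem barbalat (f : ℝ → ℝ) (hf : UniformContinuousOn f (Ici 0)) (L : ℝ)
    (hint : Tendsto (fun t => ∫ τ in (0:ℝ)..t, f τ) atTop (𝓝 L)) :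
    Tendsto f atTop (𝓝 0) := by
  have hc : ContinuousOn f (Ici 0) := hf.continuousOn
  rw [Metric.tendsto_atTop]
  intro ε hε
  obtain ⟨δ, hδ, hδ'⟩ := (Metric.uniformContinuousOn_iff.mp hf) (ε / 2) (by linarith)
  set d := δ / 2 with hd
  have hd0 : 0 < d := by positivity
  obtain ⟨N, hN⟩ := (Metric.tendsto_atTop.mp hint) (ε * d / 4) (by positivity)
  refine ⟨max N 0, fun t ht => ?_⟩
  have htN : N ≤ t := le_trans (le_max_left _ _) ht
  have ht0 : (0 : ℝ) ≤ t := le_trans (le_max_right _ _) ht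
  rw [Real.dist_eq, sub_zero]
  by_contra h
  push_neg at h
  have hint_t : IntervalIntegrable f MeasureTheory.volume t (t + d) := by
    apply (hc.mono ?_).intervalIntegrable
    rw [uIcc_of_le (by linarith)]
    exact fun x hx => le_trans ht0 hx.1
  have hint_0t : IntervalIntegrable f MeasureTheory.volume 0 t := by
    apply (hc.mono ?_).intervalIntegrable
    rw [uIcc_of_le ht0]
    exact fun x hx => hx.1
  have hint_0td : IntervalIntegrable f MeasureTheory.volume 0 (t + d) := by
    apply (hc.mono ?_).intervalIntegrable
    rw [uIcc_of_le (by linarith)]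
    exact fun x hx => hx.1
  have key : ∫ τ in t..(t + d), f τ =
      (∫ τ in (0:ℝ)..(t + d), f τ) - ∫ τ in (0:ℝ)..t, f τ := by
    rw [intervalIntegral.integral_interval_sub_left hint_0td hint_0t]
  have h1 := hN t htN
  have h2 := hN (t + d) (by linarith)
  rw [Real.dist_eq] at h1 h2
  have hsmall : |∫ τ in t..(t + d), f τ| < ε * d / 2 := by
    rw [key]
    have := abs_sub_abs_le_abs_sub (G := ℝ)
    calc |(∫ τ in (0:ℝ)..(t + d), f τ) - ∫ τ in (0:ℝ)..t, f τ|
        ≤ |(∫ τ in (0:ℝ)..(t + d), f τ) - L| + |(∫ τ in (0:ℝ)..t, f τ) - L| := by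
          have := abs_sub (G := ℝ)
          rw [show (∫ τ in (0:ℝ)..(t + d), f τ) - ∫ τ in (0:ℝ)..t, f τ =
            ((∫ τ in (0:ℝ)..(t + d), f τ) - L) - ((∫ τ in (0:ℝ)..t, f τ) - L) by ring]
          exact abs_sub _ _
      _ < ε * d / 2 := by linarith
  have hclose : ∀ s ∈ Icc t (t + d), |f s - f t| < ε / 2 := by
    intro s hs
    have hds : dist s t < δ := by
      rw [Real.dist_eq, abs_of_nonneg (by linarith [hs.1])]
      have h2 : s ≤ t + d := hs.2
      have : d < δ := by rw [hd]; linarith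
      linarith
    have := hδ' s (mem_Ici.mpr (le_trans ht0 hs.1)) t (mem_Ici.mpr ht0) hds
    rwa [Real.dist_eq] at this
  have habs : ε ≤ |f t| := h
  rcases le_abs.mp habs with hpos | hneg
  · -- f t ≥ ε
    have hlow : ∀ s ∈ Icc t (t + d), ε / 2 ≤ f s := by
      intro s hs
      have := hclose s hs
      have := abs_lt.mp this
      linarith [this.1]
    have hmono : (∫ _ in t..(t + d), (ε / 2 : ℝ)) ≤ ∫ τ in t..(t + d), f τ := by
      apply intervalIntegral.integral_mono_on (by linarith) intervalIntegrable_const hint_t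
      exact hlow
    rw [intervalIntegral.integral_const] at hmono
    simp only [add_sub_cancel_left, smul_eq_mul] at hmono
    have : ∫ τ in t..(t + d), f τ ≤ |∫ τ in t..(t + d), f τ| := le_abs_self _
    nlinarith
  · -- f t ≤ -ε
    have hhigh : ∀ s ∈ Icc t (t + d), f s ≤ -(ε / 2) := by
      intro s hs
      have := abs_lt.mp (hclose s hs)
      linarith [this.2]
    have hmono : (∫ τ in t..(t + d), f τ) ≤ ∫ _ in t..(t + d), (-(ε / 2) : ℝ) := by
      apply intervalIntegral.integral_mono_on (by linarith) hint_t intervalIntegrable_const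
      exact hhigh
    rw [intervalIntegral.integral_const] at hmono
    simp only [add_sub_cancel_left, smul_eq_mul] at hmono
    have : -|∫ τ in t..(t + d), f τ| ≤ ∫ τ in t..(t + d), f τ := neg_abs_le _
    nlinarith
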